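/- arXiv:0808.2907 — 3 statements merged into one kernel-verified Lean document; each statement's English description precedes it below -/
import Mathlib

section
/- Let p : ℕ → ℝ be nonnegative with p j ≤ c * j^(-γ) for 1 ≤ j ≤ J, where γ > 3 and J ≤ A * n^(1/γ). Then there is a constant C (depending on c, γ, A) with ∑_{j=1}^{J} j^4 * p j ≤ C * n^(max 0 ((5-γ)/γ)) * (log n + 1). Consequently n^(-1) * ∑_{j=1}^{J} j^4 * p j ≤ C * n^(-1 + max 0 ((5-γ)/γ)) * (log n + 1), which tends to 0; indeed for γ > 3 one has -1 + max(0, (5-γ)/γ) < -1/3, so n^(-1) ∑ j^4 p j = o(n^(-1/3)). -/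
theorem fourth_moment_subpower (c γ A : ℝ) (hc : 0 < c) (hγ : 3 < γ) (hA : 0 < A) :
    (-1 + max 0 ((5 - γ) / γ) < -(1 / 3)) ∧
    ∃ C > 0, ∀ (n J : ℕ) (p : ℕ → ℝ), 2 ≤ n → 1 ≤ J →
      (∀ j, 0 ≤ p j) →
      (∀ j : ℕ, 1 ≤ j → j ≤ J → p j ≤ c * (j : ℝ) ^ (-γ)) →
      (J : ℝ) ≤ A * (n : ℝ) ^ (1 / γ) →
      (∑ j ∈ Finset.Icc 1 J, (j : ℝ) ^ 4 * p j ≤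
          C * (n : ℝ) ^ (max 0 ((5 - γ) / γ)) * (Real.log n + 1)) ∧
        (n : ℝ)⁻¹ * ∑ j ∈ Finset.Icc 1 J, (j : ℝ) ^ 4 * p j ≤
          C * (n : ℝ) ^ (-1 + max 0 ((5 - γ) / γ)) * (Real.log n + 1) := by
  have hγ0 : (0:ℝ) < γ := by linarith
  constructor
  · have h1 : (5 - γ) / γ < 2 / 3 := by
      rw [div_lt_iff₀ hγ0]; nlinarith
    have h2 : max 0 ((5 - γ) / γ) < 2 / 3 := max_lt (by norm_num) h1
    linarith
  set mx := max 0 ((5 - γ) / γ) with hmx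
  have hmx0 : 0 ≤ mx := le_max_left _ _
  set K := max 1 (A ^ (5 - γ)) with hK
  have hK1 : (1:ℝ) ≤ K := le_max_left _ _
  set L := 1 + |Real.log A| with hL
  have hL1 : (1:ℝ) ≤ L := by have := abs_nonneg (Real.log A); simp only [hL]; linarith
  refine ⟨c * K * L, by positivity, ?_⟩
  intro n J p hn hJ hp0 hp hJn
  have hn1 : (1:ℝ) ≤ (n:ℝ) := by exact_mod_cast Nat.one_le_of_lt hn
  have hnpos : (0:ℝ) < (n:ℝ) := by linarith
  have hJ1 : (1:ℝ) ≤ (J:ℝ) := by exact_mod_cast hJ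
  have hlogn : 0 ≤ Real.log n := Real.log_nonneg hn1
  have hnmx1 : (1:ℝ) ≤ (n:ℝ) ^ mx := Real.one_le_rpow hn1 hmx0
  -- bound on max(1, J^(5-γ))
  have hM : max 1 ((J:ℝ) ^ (5 - γ)) ≤ K * (n:ℝ) ^ mx := by
    rcases le_or_gt 0 (5 - γ) with h5 | h5
    · have hJle : (J:ℝ) ^ (5 - γ) ≤ (A * (n:ℝ) ^ (1/γ)) ^ (5 - γ) :=
        Real.rpow_le_rpow (by linarith) hJn h5
      have heq : (A * (n:ℝ) ^ (1/γ)) ^ (5 - γ) = A ^ (5 - γ) * (n:ℝ) ^ ((5 - γ)/γ) := by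
        rw [Real.mul_rpow hA.le (Real.rpow_nonneg hnpos.le _), ← Real.rpow_mul hnpos.le]
        congr 1
        field_simp
      have h2 : A ^ (5 - γ) * (n:ℝ) ^ ((5 - γ)/γ) ≤ K * (n:ℝ) ^ mx := by
        apply mul_le_mul (le_max_right _ _) ?_ (Real.rpow_nonneg hnpos.le _) (by linarith)
        exact Real.rpow_le_rpow_of_exponent_le hn1 (le_max_right _ _)
      refine max_le ?_ (by rw [heq] at hJle; linarith)
      calc (1:ℝ) ≤ K := hK1
        _ = K * 1 := (mul_one K).symm
        _ ≤ K * (n:ℝ) ^ mx := by nlinarith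
    · have hJle : (J:ℝ) ^ (5 - γ) ≤ 1 := Real.rpow_le_one_of_one_le_of_nonpos hJ1 h5.le
      refine max_le ?_ (hJle.trans ?_) <;> nlinarith
  -- termwise bound
  have hterm : ∀ j ∈ Finset.Icc 1 J, (j:ℝ) ^ 4 * p j ≤
      c * max 1 ((J:ℝ) ^ (5 - γ)) * (j:ℝ)⁻¹ := by
    intro j hj
    simp only [Finset.mem_Icc] at hj
    have hj1 : (1:ℝ) ≤ (j:ℝ) := by exact_mod_cast hj.1
    have hjpos : (0:ℝ) < (j:ℝ) := by linarith
    have h1 : (j:ℝ) ^ 4 * p j ≤ (j:ℝ) ^ 4 * (c * (j:ℝ) ^ (-γ)) := by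
      apply mul_le_mul_of_nonneg_left (hp j hj.1 hj.2) (by positivity)
    refine h1.trans ?_
    have h2 : (j:ℝ) ^ 4 * (c * (j:ℝ) ^ (-γ)) = c * ((j:ℝ) ^ (5 - γ) * (j:ℝ)⁻¹) := by
      have hx : (j:ℝ) ^ (5 - γ) * (j:ℝ)⁻¹ = (j:ℝ) ^ ((4:ℕ):ℝ) * (j:ℝ) ^ (-γ) := by
        rw [← Real.rpow_neg_one (j:ℝ), ← Real.rpow_add hjpos, ← Real.rpow_add hjpos]
        congr 1
        push_cast; ring
      rw [hx, Real.rpow_natCast]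
      ring
    rw [h2, mul_assoc]
    have h3 : (j:ℝ) ^ (5 - γ) ≤ max 1 ((J:ℝ) ^ (5 - γ)) := by
      rcases le_or_gt 0 (5 - γ) with h5 | h5
      · exact le_max_of_le_right (Real.rpow_le_rpow hjpos.le (by exact_mod_cast hj.2) h5)
      · exact le_max_of_le_left (Real.rpow_le_one_of_one_le_of_nonpos hj1 h5.le)
    gcongr
  -- harmonic bound
  have hharm : ∑ j ∈ Finset.Icc 1 J, (j:ℝ)⁻¹ ≤ Real.log J + 1 := by
    have h1 : ((harmonic J : ℚ) : ℝ) = ∑ j ∈ Finset.Icc 1 J, (j:ℝ)⁻¹ := by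
      rw [harmonic_eq_sum_Icc]; push_cast; ring
    have := harmonic_le_one_add_log J
    rw [h1] at this; linarith
  have hlogJ : Real.log J + 1 ≤ L * (Real.log n + 1) := by
    have h1 : Real.log J ≤ Real.log (A * (n:ℝ) ^ (1/γ)) :=
      Real.log_le_log (by linarith) hJn
    have h2 : Real.log (A * (n:ℝ) ^ (1/γ)) = Real.log A + (1/γ) * Real.log n := by
      rw [Real.log_mul hA.ne' (by positivity), Real.log_rpow hnpos]
    have h3 : (1/γ) * Real.log n ≤ Real.log n := by
      apply mul_le_of_le_one_left hlogn
      rw [div_le_one hγ0]; linarith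
    have h4 : Real.log A ≤ |Real.log A| := le_abs_self _
    nlinarith [abs_nonneg (Real.log A)]
  -- main bound
  have hmain : ∑ j ∈ Finset.Icc 1 J, (j:ℝ) ^ 4 * p j ≤
      c * K * L * (n:ℝ) ^ mx * (Real.log n + 1) := by
    calc ∑ j ∈ Finset.Icc 1 J, (j:ℝ) ^ 4 * p j
        ≤ ∑ j ∈ Finset.Icc 1 J, c * max 1 ((J:ℝ) ^ (5 - γ)) * (j:ℝ)⁻¹ :=
          Finset.sum_le_sum hterm
      _ = c * max 1 ((J:ℝ) ^ (5 - γ)) * ∑ j ∈ Finset.Icc 1 J, (j:ℝ)⁻¹ := by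
          rw [Finset.mul_sum]
      _ ≤ c * (K * (n:ℝ) ^ mx) * (L * (Real.log n + 1)) := by
          have hMpos : (0:ℝ) ≤ max 1 ((J:ℝ) ^ (5 - γ)) := by positivity
          have hsumpos : (0:ℝ) ≤ ∑ j ∈ Finset.Icc 1 J, (j:ℝ)⁻¹ := by positivity
          apply mul_le_mul (by exact mul_le_mul_of_nonneg_left hM hc.le)
            (hharm.trans hlogJ) hsumpos (by positivity)
      _ = c * K * L * (n:ℝ) ^ mx * (Real.log n + 1) := by ring
  refine ⟨hmain, ?_⟩
  have heq : c * K * L * (n:ℝ) ^ (-1 + mx) * (Real.log n + 1) =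
      (n:ℝ)⁻¹ * (c * K * L * (n:ℝ) ^ mx * (Real.log n + 1)) := by
    rw [Real.rpow_add hnpos, Real.rpow_neg_one]; ring
  rw [heq]
  exact mul_le_mul_of_nonneg_left hmain (by positivity)
end

section
/- For positive integers j, d, n and integer t with 0 ≤ t and 2t + 1 + j ≤ n*d, the product ∏_{τ=0}^{t-1} (1 - j/(n*d - 2τ - 1)) satisfies the two-sided bound: (1 - 2t/(n*d))^(j/2) * exp(-C*j*(t+1)/(n*d - 2t)) ≤ ∏_{τ=0}^{t-1} (1 - j/(n*d - 2τ - 1)) ≤ (1 - 2t/(n*d))^(j/2) * exp(C*j*(t+1)/(n*d - 2t)) for some absolute constant C, provided j ≤ (n*d - 2t)/2. -/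
lemma log1sub_le {x : ℝ} (hx : x < 1) : Real.log (1 - x) ≤ -x := by
  have h := Real.log_le_sub_one_of_pos (by linarith : (0:ℝ) < 1 - x)
  linarith

lemma log1sub_ge {x : ℝ} (h : x ≤ 1/2) :
    -x - 2*x^2 ≤ Real.log (1 - x) := by
  have hpos : (0:ℝ) < 1 - x := by linarith
  have h1 : Real.log (1 - x) = - Real.log (1 - x)⁻¹ := by
    rw [Real.log_inv]; ring
  have h2 := Real.log_le_sub_one_of_pos (inv_pos.mpr hpos)
  have h3 : (1 - x)⁻¹ - 1 ≤ x + 2*x^2 := by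
    rw [inv_eq_one_div, div_sub' (ne_of_gt hpos), div_le_iff₀ hpos]
    nlinarith
  rw [h1]; linarith

set_option maxHeartbeats 2000000 in
theorem product_factor_estimate :
    ∃ C > 0, ∀ (j d n t : ℕ), 0 < j → 0 < d → 0 < n →
      2 * t + 1 + j ≤ n * d → (j : ℝ) ≤ ((n : ℝ) * d - 2 * t) / 2 →
      (1 - 2 * (t : ℝ) / ((n : ℝ) * d)) ^ ((j : ℝ) / 2) *
          Real.exp (-C * j * (t + 1) / ((n : ℝ) * d - 2 * t)) ≤
        (∏ τ ∈ Finset.range t, (1 - (j : ℝ) / ((n : ℝ) * d - 2 * τ - 1))) ∧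
      (∏ τ ∈ Finset.range t, (1 - (j : ℝ) / ((n : ℝ) * d - 2 * τ - 1))) ≤
        (1 - 2 * (t : ℝ) / ((n : ℝ) * d)) ^ ((j : ℝ) / 2) *
          Real.exp (C * j * (t + 1) / ((n : ℝ) * d - 2 * t)) := by
  refine ⟨4, by norm_num, ?_⟩
  intro j d n t hj hd hn hcard hhalf
  set m : ℝ := (n : ℝ) * d with hmdef
  have hjR : (1:ℝ) ≤ j := by exact_mod_cast hj
  have htR : (0:ℝ) ≤ t := Nat.cast_nonneg t
  have hm : (2*t + 1 + j : ℝ) ≤ m := by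
    rw [hmdef]; push_cast [← Nat.cast_mul]; exact_mod_cast hcard
  -- basic facts
  have hmt : (j:ℝ) + 1 ≤ m - 2*t := by linarith
  have hmt2 : (2:ℝ) ≤ m - 2*t := by linarith
  have hmpos : (0:ℝ) < m := by linarith
  -- each factor is positive and ≤ 1
  have hfac : ∀ τ ∈ Finset.range t, (0:ℝ) < 1 - (j:ℝ) / (m - 2*τ - 1) := by
    intro τ hτ
    have hτt : (τ:ℝ) + 1 ≤ t := by
      exact_mod_cast Nat.succ_le_of_lt (Finset.mem_range.mp hτ)
    have ha : (j:ℝ) + 2 ≤ m - 2*τ - 1 := by linarith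
    have hapos : (0:ℝ) < m - 2*τ - 1 := by linarith
    have : (j:ℝ) / (m - 2*τ - 1) < 1 := by
      rw [div_lt_one hapos]; linarith
    linarith
  have hProdPos : (0:ℝ) < ∏ τ ∈ Finset.range t, (1 - (j : ℝ) / (m - 2 * τ - 1)) :=
    Finset.prod_pos hfac
  have hbase : (0:ℝ) < 1 - 2 * (t : ℝ) / m := by
    rw [sub_pos, div_lt_one hmpos]; linarith
  -- log of product
  have hlogprod : Real.log (∏ τ ∈ Finset.range t, (1 - (j : ℝ) / (m - 2 * τ - 1)))
      = ∑ τ ∈ Finset.range t, Real.log (1 - (j:ℝ) / (m - 2*τ - 1)) :=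
    Real.log_prod (fun τ hτ => ne_of_gt (hfac τ hτ))
  -- telescoping sum for log(1 - 2t/m)
  have htel : ∑ τ ∈ Finset.range t, Real.log (1 - 2 / (m - 2*τ))
      = Real.log (1 - 2*(t:ℝ)/m) := by
    have hpos' : ∀ τ : ℕ, (τ:ℝ) ≤ t → (0:ℝ) < m - 2*τ := by
      intro τ hτ; linarith
    have : ∀ τ ∈ Finset.range t,
        Real.log (1 - 2 / (m - 2*τ))
          = Real.log (m - 2*(τ+1:ℕ)) - Real.log (m - 2*(τ:ℕ)) := by
      intro τ hτ
      have hτt : (τ:ℝ) + 1 ≤ t := by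
        exact_mod_cast Nat.succ_le_of_lt (Finset.mem_range.mp hτ)
      have h1 : (0:ℝ) < m - 2*τ := hpos' τ (by linarith)
      have h2 : (0:ℝ) < m - 2*(τ+1:ℕ) := by push_cast; linarith
      have heq : 1 - 2 / (m - 2*(τ:ℝ)) = (m - 2*(τ+1:ℕ)) / (m - 2*(τ:ℕ)) := by
        push_cast
        field_simp
        ring
      rw [heq, Real.log_div (ne_of_gt h2) (ne_of_gt h1)]
    rw [Finset.sum_congr rfl this, Finset.sum_range_sub (fun τ : ℕ => Real.log (m - 2*(τ:ℕ)))]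
    have heq2 : 1 - 2*(t:ℝ)/m = (m - 2*(t:ℕ)) / m := by
      field_simp
    rw [heq2, Real.log_div (by push_cast; linarith) (ne_of_gt hmpos)]
    push_cast
    norm_num
  -- per-term estimate
  have hterm : ∀ τ ∈ Finset.range t,
      |Real.log (1 - (j:ℝ) / (m - 2*τ - 1)) - (j:ℝ)/2 * Real.log (1 - 2 / (m - 2*τ))|
        ≤ 4 * j / (m - 2*t) := by
    intro τ hτ
    have hτt : (τ:ℝ) + 1 ≤ t := by
      exact_mod_cast Nat.succ_le_of_lt (Finset.mem_range.mp hτ)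
    set a : ℝ := m - 2*τ - 1 with hadef
    have haget : m - 2*t + 1 ≤ a := by rw [hadef]; linarith
    have ha3 : (3:ℝ) ≤ a := by linarith
    have hapos : (0:ℝ) < a := by linarith
    have ha1pos : (0:ℝ) < a + 1 := by linarith
    have hx1 : (j:ℝ)/a ≤ 1/2 := by
      rw [div_le_iff₀ hapos]; linarith
    have hx1nn : (0:ℝ) ≤ (j:ℝ)/a := by positivity
    have hx2 : 2/(a+1) ≤ 1/2 := by
      rw [div_le_iff₀ ha1pos]; linarith
    have hx2nn : (0:ℝ) ≤ 2/(a+1) := by positivity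
    have hma1 : m - 2*τ = a + 1 := by rw [hadef]; ring
    rw [hma1]
    have hub1 : Real.log (1 - (j:ℝ)/a) ≤ -((j:ℝ)/a) := log1sub_le (by linarith)
    have hlb1 : -((j:ℝ)/a) - 2*((j:ℝ)/a)^2 ≤ Real.log (1 - (j:ℝ)/a) := log1sub_ge hx1
    have hub2 : Real.log (1 - 2/(a+1)) ≤ -(2/(a+1)) := log1sub_le (by linarith)
    have hlb2 : -(2/(a+1)) - 2*(2/(a+1))^2 ≤ Real.log (1 - 2/(a+1)) := log1sub_ge hx2
    have hjnn : (0:ℝ) ≤ (j:ℝ) := by linarith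
    rw [abs_le]
    constructor
    · -- lower bound: D ≥ -4j/(m-2t)
      have h1 : -((j:ℝ)/a) - 2*((j:ℝ)/a)^2 + (j:ℝ)/2 * (2/(a+1))
          ≤ Real.log (1 - (j:ℝ)/a) - (j:ℝ)/2 * Real.log (1 - 2/(a+1)) := by
        have := mul_le_mul_of_nonneg_left hub2 (by linarith : (0:ℝ) ≤ (j:ℝ)/2)
        nlinarith
      have key : -(4 * (j:ℝ) / (m - 2*t)) ≤ -((j:ℝ)/a) - 2*((j:ℝ)/a)^2 + (j:ℝ)/2 * (2/(a+1)) := by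
        have e1 : -((j:ℝ)/a) + (j:ℝ)/2 * (2/(a+1)) = -((j:ℝ)/(a*(a+1))) := by
          field_simp; ring
        -- j/(a(a+1)) ≤ j/(m-2t) and 2(j/a)^2 ≤ j/(m-2t)
        have hmt0 : (0:ℝ) < m - 2*t := by linarith
        have b1 : (j:ℝ)/(a*(a+1)) ≤ (j:ℝ)/(m-2*t) := by
          apply div_le_div_of_nonneg_left hjnn hmt0
          nlinarith
        have b2 : 2*((j:ℝ)/a)^2 ≤ (j:ℝ)/(m-2*t) := by
          have hja : (j:ℝ)/a ≤ 1/2 := hx1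
          have : 2*((j:ℝ)/a)^2 ≤ (j:ℝ)/a := by nlinarith
          have : (j:ℝ)/a ≤ (j:ℝ)/(m-2*t) := by
            apply div_le_div_of_nonneg_left hjnn hmt0; linarith
          linarith [ (by nlinarith : 2*((j:ℝ)/a)^2 ≤ (j:ℝ)/a) ]
        have e4 : 4 * (j:ℝ) / (m - 2*t) = 2*((j:ℝ)/(m-2*t)) + 2*((j:ℝ)/(m-2*t)) := by ring
        nlinarith [b1, b2]
      linarith
    · -- upper bound: D ≤ 4j/(m-2t)
      have h1 : Real.log (1 - (j:ℝ)/a) - (j:ℝ)/2 * Real.log (1 - 2/(a+1))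
          ≤ -((j:ℝ)/a) + (j:ℝ)/2 * (2/(a+1) + 2*(2/(a+1))^2) := by
        have := mul_le_mul_of_nonneg_left hlb2 (by linarith : (0:ℝ) ≤ (j:ℝ)/2)
        nlinarith
      have key : -((j:ℝ)/a) + (j:ℝ)/2 * (2/(a+1) + 2*(2/(a+1))^2) ≤ 4 * (j:ℝ) / (m - 2*t) := by
        have hmt0 : (0:ℝ) < m - 2*t := by linarith
        have e1 : -((j:ℝ)/a) + (j:ℝ)/(a+1) ≤ 0 := by
          have : (j:ℝ)/(a+1) ≤ (j:ℝ)/a := by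
            apply div_le_div_of_nonneg_left hjnn hapos; linarith
          linarith
        have b2 : (j:ℝ) * (4/(a+1)^2) ≤ 4*(j:ℝ)/(m-2*t) := by
          have h4 : (4:ℝ)/(a+1)^2 ≤ 4/(m-2*t) := by
            apply div_le_div_of_nonneg_left (by norm_num) hmt0
            nlinarith
          calc (j:ℝ) * (4/(a+1)^2) ≤ (j:ℝ) * (4/(m-2*t)) :=
                mul_le_mul_of_nonneg_left h4 hjnn
            _ = 4*(j:ℝ)/(m-2*t) := by ring
        have expand : (j:ℝ)/2 * (2/(a+1) + 2*(2/(a+1))^2)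
            = (j:ℝ)/(a+1) + (j:ℝ) * (4/(a+1)^2) := by
          field_simp; ring
        rw [expand] at *
        linarith
      linarith
  -- sum the estimates
  have hsum : |Real.log (∏ τ ∈ Finset.range t, (1 - (j : ℝ) / (m - 2 * τ - 1)))
      - (j:ℝ)/2 * Real.log (1 - 2*(t:ℝ)/m)| ≤ 4 * j * (t+1) / (m - 2*t) := by
    rw [hlogprod, ← htel, Finset.mul_sum, ← Finset.sum_sub_distrib]
    calc |∑ τ ∈ Finset.range t,
          (Real.log (1 - (j:ℝ) / (m - 2*τ - 1)) - (j:ℝ)/2 * Real.log (1 - 2 / (m - 2*τ)))|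
        ≤ ∑ τ ∈ Finset.range t,
          |Real.log (1 - (j:ℝ) / (m - 2*τ - 1)) - (j:ℝ)/2 * Real.log (1 - 2 / (m - 2*τ))| :=
          Finset.abs_sum_le_sum_abs _ _
      _ ≤ ∑ τ ∈ Finset.range t, 4 * (j:ℝ) / (m - 2*t) := Finset.sum_le_sum hterm
      _ = t * (4 * (j:ℝ) / (m - 2*t)) := by rw [Finset.sum_const, Finset.card_range]; ring
      _ = 4 * (j:ℝ) * t / (m - 2*t) := by ring
      _ ≤ 4 * j * (t+1) / (m - 2*t) := by
          rw [div_le_div_iff_of_pos_right (by linarith : (0:ℝ) < m - 2*t)]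
          nlinarith
  -- convert to exponentials
  have hrpow : (1 - 2 * (t : ℝ) / m) ^ ((j : ℝ) / 2)
      = Real.exp ((j:ℝ)/2 * Real.log (1 - 2*(t:ℝ)/m)) := by
    rw [Real.rpow_def_of_pos hbase]; ring_nf
  have hP : (∏ τ ∈ Finset.range t, (1 - (j : ℝ) / (m - 2 * τ - 1)))
      = Real.exp (Real.log (∏ τ ∈ Finset.range t, (1 - (j : ℝ) / (m - 2 * τ - 1)))) :=
    (Real.exp_log hProdPos).symm
  rw [abs_le] at hsum
  constructor
  · rw [hrpow, hP, ← Real.exp_add, Real.exp_le_exp]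
    have : -(4:ℝ) * j * (t + 1) / (m - 2 * t) = -(4 * j * (t+1) / (m - 2*t)) := by ring
    rw [this]
    linarith [hsum.1]
  · rw [hrpow, hP, ← Real.exp_add, Real.exp_le_exp]
    linarith [hsum.2]
end

section
/- Let p : ℕ → ℝ be nonnegative, supported on {1, …, J} with J ≤ A*n^(1/γ), γ > 3, satisfying p j ≤ c*j^(-γ), and let d = ∑_j j p j ≥ δ > 0. Suppose ∑_j j(j-2) p j ≤ -a*d for some a > 0 (subcriticality). Then for all sufficiently large n and all t ≤ n^α with α < 1 - 1/γ: n * ∑_{j≤J} j(j-2) p j * (1 - 2t/(n d))^(j/2) ≤ n * ∑_{j≤J} j(j-2) p j + C * n^(α + 1/γ) * (log n + 1) for a constant C depending only on c, γ, A, δ. -/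
theorem drift_sum_estimate (c γ A δ a α : ℝ) (hc : 0 < c) (hγ : 3 < γ)
    (hA : 0 < A) (hδ : 0 < δ) (ha : 0 < a) (hα : 0 ≤ α) (hα' : α < 1 - 1 / γ) :
    ∃ C > 0, ∃ N : ℕ, ∀ n : ℕ, N ≤ n → ∀ (J : ℕ) (p : ℕ → ℝ) (t : ℕ),
      (∀ j, 0 ≤ p j) →
      (∀ j : ℕ, 1 ≤ j → j ≤ J → p j ≤ c * (j : ℝ) ^ (-γ)) →
      (∀ j : ℕ, (J < j ∨ j = 0) → p j = 0) →
      (J : ℝ) ≤ A * (n : ℝ) ^ (1 / γ) →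
      δ ≤ ∑ j ∈ Finset.Icc 1 J, (j : ℝ) * p j →
      (∑ j ∈ Finset.Icc 1 J, (j : ℝ) * ((j : ℝ) - 2) * p j ≤
        -a * ∑ j ∈ Finset.Icc 1 J, (j : ℝ) * p j) →
      (t : ℝ) ≤ (n : ℝ) ^ α →
      (n : ℝ) * ∑ j ∈ Finset.Icc 1 J, (j : ℝ) * ((j : ℝ) - 2) * p j *
          (1 - 2 * (t : ℝ) / ((n : ℝ) * ∑ j ∈ Finset.Icc 1 J, (j : ℝ) * p j)) ^
            ((j : ℝ) / 2) ≤
        (n : ℝ) * ∑ j ∈ Finset.Icc 1 J, (j : ℝ) * ((j : ℝ) - 2) * p j +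
          C * (n : ℝ) ^ (α + 1 / γ) * (Real.log n + 1) := by
  have hγ0 : (0:ℝ) < γ := by linarith
  have hγinv : 0 < 1 / γ := by positivity
  have h1α : 0 < 1 - α := by linarith
  obtain ⟨N₀, hN₀⟩ : ∃ N : ℕ, ∀ n : ℕ, N ≤ n → (4 / δ : ℝ) ≤ (n : ℝ) ^ (1 - α) := by
    have h := (tendsto_rpow_atTop h1α).comp tendsto_natCast_atTop_atTop (α := ℕ)
    exact Filter.eventually_atTop.mp (h.eventually_ge_atTop (4 / δ))
  refine ⟨2 * c / δ, by positivity, max N₀ 1, ?_⟩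
  intro n hn J p t hp hpow hsupp hJ hd hsub ht
  have hn1 : 1 ≤ n := le_trans (le_max_right _ _) hn
  have hn0 : (0:ℝ) < (n:ℝ) := by exact_mod_cast hn1
  have hn1R : (1:ℝ) ≤ (n:ℝ) := by exact_mod_cast hn1
  set D := ∑ j ∈ Finset.Icc 1 J, (j : ℝ) * p j with hD
  have hD0 : 0 < D := lt_of_lt_of_le hδ hd
  have hnD : 0 < (n:ℝ) * D := by positivity
  have hnδ : 0 < (n:ℝ) * δ := by positivity
  have ht0 : (0:ℝ) ≤ (t:ℝ) := Nat.cast_nonneg t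
  have hnα : 0 < (n:ℝ) ^ α := Real.rpow_pos_of_pos hn0 α
  -- n * δ ≥ 4 * n^α
  have h4 : 4 * (n:ℝ) ^ α ≤ (n:ℝ) * δ := by
    have hsplit : (n:ℝ) = (n:ℝ) ^ α * (n:ℝ) ^ (1 - α) := by
      rw [← Real.rpow_add hn0]
      norm_num
    have hge : (4 / δ : ℝ) ≤ (n:ℝ) ^ (1 - α) := hN₀ n (le_trans (le_max_left _ _) hn)
    calc 4 * (n:ℝ) ^ α = (n:ℝ) ^ α * (4 / δ) * δ := by field_simp
      _ ≤ (n:ℝ) ^ α * (n:ℝ) ^ (1 - α) * δ := by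
        have h0 : (0:ℝ) ≤ (n:ℝ) ^ α := hnα.le
        gcongr
      _ = (n:ℝ) * δ := by rw [← hsplit]
  have hnδD : (n:ℝ) * δ ≤ (n:ℝ) * D := mul_le_mul_of_nonneg_left hd hn0.le
  set x := 1 - 2 * (t:ℝ) / ((n:ℝ) * D) with hx
  have hr0 : 0 ≤ 2 * (t:ℝ) / ((n:ℝ) * D) := by positivity
  have hrhalf : 2 * (t:ℝ) / ((n:ℝ) * D) ≤ 1 / 2 := by
    rw [div_le_iff₀ hnD]
    nlinarith
  have hx0 : 0 < x := by rw [hx]; linarith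
  have hxle1 : x ≤ 1 := by rw [hx]; linarith
  -- per-term bound
  have hterm : ∀ j ∈ Finset.Icc 1 J,
      (j:ℝ) * ((j:ℝ) - 2) * p j * x ^ ((j:ℝ) / 2) ≤
        (j:ℝ) * ((j:ℝ) - 2) * p j +
          (if j = 1 then 2 * c * (t:ℝ) / ((n:ℝ) * δ) else 0) := by
    intro j hj
    rw [Finset.mem_Icc] at hj
    rcases eq_or_lt_of_le hj.1 with h1 | h2
    · -- j = 1
      subst h1
      rw [if_pos rfl]
      have hxhalf1 : x ^ (((1:ℕ):ℝ) / 2) ≤ 1 :=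
        Real.rpow_le_one hx0.le hxle1 (by norm_num)
      have hxx : x ≤ x ^ (((1:ℕ):ℝ) / 2) := by
        calc x = x ^ (1:ℝ) := (Real.rpow_one x).symm
          _ ≤ x ^ (((1:ℕ):ℝ) / 2) :=
            Real.rpow_le_rpow_of_exponent_ge hx0 hxle1 (by norm_num)
      have hp1c : p 1 ≤ c := by
        have := hpow 1 le_rfl hj.2
        simpa using this
      have hkey : p 1 * (1 - x ^ (((1:ℕ):ℝ) / 2)) ≤ c * (2 * (t:ℝ) / ((n:ℝ) * δ)) := by
        have h1 : 1 - x ^ (((1:ℕ):ℝ) / 2) ≤ 2 * (t:ℝ) / ((n:ℝ) * D) := by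
          have : 1 - x = 2 * (t:ℝ) / ((n:ℝ) * D) := by rw [hx]; ring
          linarith
        have h2 : 2 * (t:ℝ) / ((n:ℝ) * D) ≤ 2 * (t:ℝ) / ((n:ℝ) * δ) := by
          apply div_le_div_of_nonneg_left (by positivity) hnδ hnδD
        exact mul_le_mul hp1c (h1.trans h2) (by linarith) hc.le
      have hc2 : c * (2 * (t:ℝ) / ((n:ℝ) * δ)) = 2 * c * (t:ℝ) / ((n:ℝ) * δ) := by ring
      push_cast at hkey ⊢
      linarith [hkey]
    · -- j ≥ 2
      rw [if_neg (by omega), add_zero]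
      have hj2 : (2:ℝ) ≤ (j:ℝ) := by exact_mod_cast h2
      have hf : 0 ≤ (j:ℝ) * ((j:ℝ) - 2) * p j :=
        mul_nonneg (mul_nonneg (by linarith) (by linarith)) (hp j)
      have hxe : x ^ ((j:ℝ) / 2) ≤ 1 :=
        Real.rpow_le_one hx0.le hxle1 (by positivity)
      exact mul_le_of_le_one_right hf hxe
  have hsum := Finset.sum_le_sum hterm
  have hite : ∑ j ∈ Finset.Icc 1 J,
      (if j = 1 then 2 * c * (t:ℝ) / ((n:ℝ) * δ) else 0) ≤
      2 * c * (t:ℝ) / ((n:ℝ) * δ) := by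
    rw [Finset.sum_ite_eq' (Finset.Icc 1 J) 1 (fun _ => 2 * c * (t:ℝ) / ((n:ℝ) * δ))]
    split
    · exact le_refl _
    · positivity
  have hE : 0 ≤ 2 * c * (t:ℝ) / ((n:ℝ) * δ) := by positivity
  have hstep : (n:ℝ) * ∑ j ∈ Finset.Icc 1 J,
      (j:ℝ) * ((j:ℝ) - 2) * p j * x ^ ((j:ℝ) / 2) ≤
      (n:ℝ) * ∑ j ∈ Finset.Icc 1 J, (j:ℝ) * ((j:ℝ) - 2) * p j +
        (n:ℝ) * (2 * c * (t:ℝ) / ((n:ℝ) * δ)) := by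
    have hsum2 : ∑ j ∈ Finset.Icc 1 J,
        ((j:ℝ) * ((j:ℝ) - 2) * p j +
          (if j = 1 then 2 * c * (t:ℝ) / ((n:ℝ) * δ) else 0)) ≤
        ∑ j ∈ Finset.Icc 1 J, (j:ℝ) * ((j:ℝ) - 2) * p j +
          2 * c * (t:ℝ) / ((n:ℝ) * δ) := by
      rw [Finset.sum_add_distrib]
      exact add_le_add_right hite _
    have this := hsum.trans hsum2
    calc (n:ℝ) * ∑ j ∈ Finset.Icc 1 J,
        (j:ℝ) * ((j:ℝ) - 2) * p j * x ^ ((j:ℝ) / 2)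
        ≤ (n:ℝ) * (∑ j ∈ Finset.Icc 1 J, (j:ℝ) * ((j:ℝ) - 2) * p j +
            2 * c * (t:ℝ) / ((n:ℝ) * δ)) :=
          mul_le_mul_of_nonneg_left this hn0.le
      _ = _ := by ring
  have hfinal : (n:ℝ) * (2 * c * (t:ℝ) / ((n:ℝ) * δ)) ≤
      2 * c / δ * (n:ℝ) ^ (α + 1 / γ) * (Real.log n + 1) := by
    have heq : (n:ℝ) * (2 * c * (t:ℝ) / ((n:ℝ) * δ)) = 2 * c * (t:ℝ) / δ := by
      field_simp
    rw [heq]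
    have h1 : (n:ℝ) ^ α ≤ (n:ℝ) ^ (α + 1 / γ) :=
      Real.rpow_le_rpow_of_exponent_le hn1R (by linarith)
    have h2 : (0:ℝ) ≤ Real.log n := Real.log_nonneg hn1R
    have h3 : 0 < (n:ℝ) ^ (α + 1 / γ) := Real.rpow_pos_of_pos hn0 _
    have hrw : 2 * c / δ * (n:ℝ) ^ (α + 1 / γ) * (Real.log n + 1) =
        2 * c * ((n:ℝ) ^ (α + 1 / γ) * (Real.log n + 1)) / δ := by ring
    rw [hrw]
    apply div_le_div_of_nonneg_right ?_ hδ.le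
    have s2 : (n:ℝ) ^ (α + 1 / γ) ≤ (n:ℝ) ^ (α + 1 / γ) * (Real.log n + 1) :=
      le_mul_of_one_le_right h3.le (by linarith)
    have s1 : (t:ℝ) ≤ (n:ℝ) ^ (α + 1 / γ) * (Real.log n + 1) :=
      le_trans (le_trans ht h1) s2
    exact mul_le_mul_of_nonneg_left s1 (by positivity)
  linarith [hstep, hfinal]
end
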